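/- It holds that f(ub^imp) = 0; in particular, ub^imp is the unique root of f. -/
import Mathlib


/-- `ubImp k m s` is the improved upper bound `ub^imp`: the maximum, over all
admissible interval tuples `(I_1, …, I_k)` with `I_l = [a_l, b_l] ⊆ [1, m_l]`,
of `(∑_l ∑_{i ∈ I_l} s^l_i) / (∑_l |I_l|)`. -/
noncomputable def ubImp (k : ℕ) (m : Fin k → ℕ) (s : Fin k → ℕ → ℝ) : ℝ :=
  sSup {r : ℝ | ∃ a b : Fin k → ℕ, (∀ l, 1 ≤ a l ∧ a l ≤ b l ∧ b l ≤ m l) ∧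
    r = (∑ l : Fin k, ∑ i ∈ Finset.Icc (a l) (b l), s l i) /
        (∑ l : Fin k, ((Finset.Icc (a l) (b l)).card : ℝ))}

/-- `fFun k m s K` is the function
`f(K) = ∑_l max_{I = [a,b] ⊆ [1, m_l]} (∑_{i ∈ I} s^l_i − K·|I|)`. -/
noncomputable def fFun (k : ℕ) (m : Fin k → ℕ) (s : Fin k → ℕ → ℝ) (K : ℝ) : ℝ :=
  ∑ l : Fin k, sSup {r : ℝ | ∃ a b : ℕ, 1 ≤ a ∧ a ≤ b ∧ b ≤ m l ∧
    r = (∑ i ∈ Finset.Icc a b, s l i) - K * ((Finset.Icc a b).card : ℝ)}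

section Helpers

variable (k : ℕ) (m : Fin k → ℕ) (s : Fin k → ℕ → ℝ)

def Aset (l : Fin k) (K : ℝ) : Set ℝ :=
  {r : ℝ | ∃ a b : ℕ, 1 ≤ a ∧ a ≤ b ∧ b ≤ m l ∧
    r = (∑ i ∈ Finset.Icc a b, s l i) - K * ((Finset.Icc a b).card : ℝ)}

def Uset : Set ℝ :=
  {r : ℝ | ∃ a b : Fin k → ℕ, (∀ l, 1 ≤ a l ∧ a l ≤ b l ∧ b l ≤ m l) ∧
    r = (∑ l : Fin k, ∑ i ∈ Finset.Icc (a l) (b l), s l i) /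
        (∑ l : Fin k, ((Finset.Icc (a l) (b l)).card : ℝ))}

lemma Aset_finite (l : Fin k) (K : ℝ) : (Aset k m s l K).Finite := by
  apply Set.Finite.subset (Set.Finite.image
    (fun p : ℕ × ℕ => (∑ i ∈ Finset.Icc p.1 p.2, s l i) - K * ((Finset.Icc p.1 p.2).card : ℝ))
    ((Set.finite_Icc 1 (m l)).prod (Set.finite_Icc 1 (m l))))
  rintro r ⟨a, b, ha, hab, hb, rfl⟩
  exact ⟨(a, b), ⟨⟨ha, le_trans hab hb⟩, ⟨le_trans ha hab, hb⟩⟩, rfl⟩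

lemma Aset_nonempty (hm : ∀ l, 1 ≤ m l) (l : Fin k) (K : ℝ) : (Aset k m s l K).Nonempty :=
  ⟨_, 1, 1, le_refl 1, le_refl 1, hm l, rfl⟩

lemma Uset_finite : (Uset k m s).Finite := by
  apply Set.Finite.subset (Set.Finite.image
    (fun p : (Fin k → ℕ) × (Fin k → ℕ) =>
      (∑ l : Fin k, ∑ i ∈ Finset.Icc (p.1 l) (p.2 l), s l i) /
        (∑ l : Fin k, ((Finset.Icc (p.1 l) (p.2 l)).card : ℝ)))
    ((Set.Finite.pi (fun l => Set.finite_Icc 1 (m l))).prod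
      (Set.Finite.pi (fun l => Set.finite_Icc 1 (m l)))))
  rintro r ⟨a, b, h, rfl⟩
  exact ⟨(a, b), ⟨fun l _ => ⟨(h l).1, le_trans (h l).2.1 (h l).2.2⟩,
    fun l _ => ⟨le_trans (h l).1 (h l).2.1, (h l).2.2⟩⟩, rfl⟩

lemma Uset_nonempty (hm : ∀ l, 1 ≤ m l) : (Uset k m s).Nonempty :=
  ⟨_, fun _ => 1, fun _ => 1, fun l => ⟨le_refl 1, le_refl 1, hm l⟩, rfl⟩

lemma card_one_le {a b : ℕ} (hab : a ≤ b) : (1 : ℝ) ≤ ((Finset.Icc a b).card : ℝ) := by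
  rw [Nat.card_Icc]
  exact_mod_cast Nat.le_sub_of_add_le (by omega)

lemma Aset_step (hm : ∀ l, 1 ≤ m l) (l : Fin k) {K1 K2 : ℝ} (h : K1 ≤ K2) :
    sSup (Aset k m s l K2) + (K2 - K1) ≤ sSup (Aset k m s l K1) := by
  obtain ⟨a, b, ha, hab, hb, hval⟩ :=
    (Aset_nonempty k m s hm l K2).csSup_mem (Aset_finite k m s l K2)
  have hc : (1 : ℝ) ≤ ((Finset.Icc a b).card : ℝ) := card_one_le hab
  have hmem : (∑ i ∈ Finset.Icc a b, s l i) - K1 * ((Finset.Icc a b).card : ℝ)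
      ∈ Aset k m s l K1 := ⟨a, b, ha, hab, hb, rfl⟩
  have hle := le_csSup (Aset_finite k m s l K1).bddAbove hmem
  nlinarith [hle, hval]

end Helpers

theorem stmt3 (k : ℕ) (hk : 1 ≤ k) (m : Fin k → ℕ) (hm : ∀ l, 1 ≤ m l)
    (s : Fin k → ℕ → ℝ) :
    fFun k m s (ubImp k m s) = 0 ∧
    ∀ K : ℝ, fFun k m s K = 0 → K = ubImp k m s := by
  have hkne : (Finset.univ : Finset (Fin k)).Nonempty := ⟨⟨0, hk⟩, Finset.mem_univ _⟩
  have hfFun : ∀ K : ℝ, fFun k m s K = ∑ l : Fin k, sSup (Aset k m s l K) := fun K => rfl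
  have hub : ubImp k m s = sSup (Uset k m s) := rfl
  set ub := ubImp k m s with hubdef
  -- f(ub) ≥ 0
  have hge : 0 ≤ fFun k m s ub := by
    obtain ⟨a, b, hadm, hval⟩ := (Uset_nonempty k m s hm).csSup_mem (Uset_finite k m s)
    have hD : 0 < ∑ l : Fin k, ((Finset.Icc (a l) (b l)).card : ℝ) :=
      Finset.sum_pos (fun l _ => lt_of_lt_of_le one_pos (card_one_le (hadm l).2.1)) hkne
    have hN : (∑ l : Fin k, ∑ i ∈ Finset.Icc (a l) (b l), s l i) =
        ub * (∑ l : Fin k, ((Finset.Icc (a l) (b l)).card : ℝ)) := by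
      rw [hub, hval]
      exact (div_mul_cancel₀ _ (ne_of_gt hD)).symm
    have hsum : ∀ l : Fin k,
        (∑ i ∈ Finset.Icc (a l) (b l), s l i) - ub * ((Finset.Icc (a l) (b l)).card : ℝ)
          ≤ sSup (Aset k m s l ub) := fun l =>
      le_csSup (Aset_finite k m s l ub).bddAbove
        ⟨a l, b l, (hadm l).1, (hadm l).2.1, (hadm l).2.2, rfl⟩
    have := Finset.sum_le_sum (fun l (_ : l ∈ Finset.univ) => hsum l)
    rw [hfFun]
    calc (0:ℝ) = ∑ l : Fin k,
        ((∑ i ∈ Finset.Icc (a l) (b l), s l i) - ub * ((Finset.Icc (a l) (b l)).card : ℝ)) := by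
          rw [Finset.sum_sub_distrib, ← Finset.mul_sum, hN]; ring
      _ ≤ _ := this
  -- f(ub) ≤ 0
  have hle : fFun k m s ub ≤ 0 := by
    have hmax : ∀ l : Fin k, sSup (Aset k m s l ub) ∈ Aset k m s l ub := fun l =>
      (Aset_nonempty k m s hm l ub).csSup_mem (Aset_finite k m s l ub)
    choose a b h1 h2 h3 h4 using hmax
    have hD : 0 < ∑ l : Fin k, ((Finset.Icc (a l) (b l)).card : ℝ) :=
      Finset.sum_pos (fun l _ => lt_of_lt_of_le one_pos (card_one_le (h2 l))) hkne
    have hrat : (∑ l : Fin k, ∑ i ∈ Finset.Icc (a l) (b l), s l i) /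
        (∑ l : Fin k, ((Finset.Icc (a l) (b l)).card : ℝ)) ≤ ub :=
      le_csSup (Uset_finite k m s).bddAbove ⟨a, b, fun l => ⟨h1 l, h2 l, h3 l⟩, rfl⟩
    have hN : (∑ l : Fin k, ∑ i ∈ Finset.Icc (a l) (b l), s l i) ≤
        ub * (∑ l : Fin k, ((Finset.Icc (a l) (b l)).card : ℝ)) := by
      rwa [div_le_iff₀ hD] at hrat
    rw [hfFun]
    calc ∑ l : Fin k, sSup (Aset k m s l ub)
        = ∑ l : Fin k, ((∑ i ∈ Finset.Icc (a l) (b l), s l i)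
            - ub * ((Finset.Icc (a l) (b l)).card : ℝ)) := Finset.sum_congr rfl (fun l _ => h4 l)
      _ = (∑ l : Fin k, ∑ i ∈ Finset.Icc (a l) (b l), s l i)
            - ub * (∑ l : Fin k, ((Finset.Icc (a l) (b l)).card : ℝ)) := by
          rw [Finset.sum_sub_distrib, ← Finset.mul_sum]
      _ ≤ 0 := by linarith
  have hf0 : fFun k m s ub = 0 := le_antisymm hle hge
  refine ⟨hf0, fun K hK => ?_⟩
  have hstep : ∀ K1 K2 : ℝ, K1 ≤ K2 →
      fFun k m s K2 + k * (K2 - K1) ≤ fFun k m s K1 := by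
    intro K1 K2 h
    rw [hfFun, hfFun]
    calc (∑ l : Fin k, sSup (Aset k m s l K2)) + k * (K2 - K1)
        = ∑ l : Fin k, (sSup (Aset k m s l K2) + (K2 - K1)) := by
          rw [Finset.sum_add_distrib, Finset.sum_const, Finset.card_univ, Fintype.card_fin,
            nsmul_eq_mul]
      _ ≤ _ := Finset.sum_le_sum (fun l _ => Aset_step k m s hm l h)
  by_contra hne'
  have hk1 : (1:ℝ) ≤ (k:ℝ) := by exact_mod_cast hk
  rcases lt_or_gt_of_ne hne' with h | h
  · have := hstep K ub (le_of_lt h)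
    rw [hf0, hK] at this
    nlinarith
  · have := hstep ub K (le_of_lt h)
    rw [hf0, hK] at this
    nlinarith
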